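/- arXiv:2101.02265 — 5 statements merged into one kernel-verified Lean document; each statement's English description precedes it below -/
import Mathlib

section
/- A strongly connected, cycle-balanced weighted digraph on n vertices has at least 2(n−1) arcs. -/
/-- There is an arc from `i` to `j` in the weighted digraph associated with `A`
iff `i ≠ j` and `A j i > 0` (the arc `(i,j)` carries weight `a_{ji}`). -/
def Arc {n : ℕ} (A : Fin n → Fin n → ℝ) (i j : Fin n) : Prop :=
  i ≠ j ∧ 0 < A j i

/-- The weight of a cyclic list of vertices: product of weights of the arcs
`c m → c (m+1)` (indices mod `k+2`). -/
def cycWeight {n k : ℕ} (A : Fin n → Fin n → ℝ) (c : Fin (k + 2) → Fin n) : ℝ :=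
  ∏ m : Fin (k + 2), A (c (m + 1)) (c m)

/-- `c` is a directed cycle: distinct vertices, each consecutive pair (cyclically)
joined by an arc. -/
def IsCycle {n k : ℕ} (A : Fin n → Fin n → ℝ) (c : Fin (k + 2) → Fin n) : Prop :=
  Function.Injective c ∧ ∀ m, Arc A (c m) (c (m + 1))

/-- `A`'s digraph is cycle-balanced: the reversal of any directed cycle is again a
directed cycle, of the same weight. -/
def CycleBalanced {n : ℕ} (A : Fin n → Fin n → ℝ) : Prop :=
  ∀ (k : ℕ) (c : Fin (k + 2) → Fin n), IsCycle A c →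
    IsCycle A (fun m => c (-m)) ∧ cycWeight A c = cycWeight A (fun m => c (-m))

/-- Strong connectivity: from any vertex there is a directed path to any other. -/
def StronglyConnected {n : ℕ} (A : Fin n → Fin n → ℝ) : Prop :=
  ∀ i j : Fin n, Relation.ReflTransGen (Arc A) i j

/-- From any chain we can extract a nodup chain with the same endpoints. -/
lemma exists_nodup_chain_aux {α : Type*} {r : α → α → Prop} {b : α} :
    ∀ (l : List α) (a : α), List.Chain r a l →
      (a :: l).getLast (List.cons_ne_nil _ _) = b →
      ∃ l', l' ⊆ l ∧ List.Chain r a l' ∧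
        (a :: l').getLast (List.cons_ne_nil _ _) = b ∧ (a :: l').Nodup := by
  intro l
  induction l with
  | nil => intro a _ hb; exact ⟨[], by simp, List.Chain.nil, hb, by simp⟩
  | cons c t ih =>
    intro a hch hb
    simp only [List.Chain, List.isChain_cons_cons] at hch
    obtain ⟨hac, hct⟩ := hch
    rw [List.getLast_cons_cons] at hb
    obtain ⟨t', ht'sub, ht'ch, ht'last, ht'nd⟩ := ih c hct hb
    by_cases ha : a ∈ c :: t'
    · obtain ⟨p, s, hps⟩ := List.append_of_mem ha
      have hsuf : (a :: s) <:+ (c :: t') := ⟨p, hps.symm⟩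
      refine ⟨s, ?_, ?_, ?_, ?_⟩
      · intro x hx
        have : x ∈ c :: t' := hsuf.subset (List.mem_cons_of_mem _ hx)
        rcases List.mem_cons.mp this with h | h
        · exact h ▸ List.mem_cons_self
        · exact List.mem_cons_of_mem _ (ht'sub h)
      · have h1 : List.Chain' r (c :: t') := ht'ch
        exact (List.IsChain.suffix h1 hsuf : List.Chain' r (a :: s))
      · have key : ∀ (L : List α) (hL : L ≠ []), L = p ++ a :: s →
            L.getLast hL = (a :: s).getLast (List.cons_ne_nil _ _) := by
          rintro L hL rfl
          rw [List.getLast_append]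
          simp
        rw [← key _ (List.cons_ne_nil _ _) hps]
        exact ht'last
      · exact ht'nd.sublist hsuf.sublist
    · refine ⟨c :: t', ?_, (List.isChain_cons_cons.mpr ⟨hac, ht'ch⟩ : List.IsChain r (a :: c :: t')), ?_, ?_⟩
      · exact fun x hx => List.mem_cons.mp hx |>.elim
          (fun h => h ▸ List.mem_cons_self) (fun h => List.mem_cons_of_mem _ (ht'sub h))
      · rw [List.getLast_cons_cons]; exact ht'last
      · exact List.nodup_cons.mpr ⟨ha, ht'nd⟩

lemma arc_symm {n : ℕ} {A : Fin n → Fin n → ℝ}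
    (hsc : StronglyConnected A) (hcb : CycleBalanced A) {i j : Fin n}
    (h : Arc A i j) : Arc A j i := by
  obtain ⟨l₀, hch₀, hlast₀⟩ := List.exists_isChain_cons_of_relationReflTransGen (hsc j i)
  obtain ⟨l, -, hch, hlast, hnd⟩ := exists_nodup_chain_aux l₀ j hch₀ hlast₀
  -- l ≠ [] since i ≠ j
  have hlne : l ≠ [] := by
    rintro rfl
    simp at hlast
    exact h.1 hlast.symm
  set L : List (Fin n) := j :: l with hL
  obtain ⟨k, hk⟩ : ∃ k, L.length = k + 2 := by
    refine ⟨l.length - 1, ?_⟩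
    have : 1 ≤ l.length := List.length_pos_iff.mpr hlne
    simp [hL]
    omega
  set c : Fin (k + 2) → Fin n := fun t => L.get (Fin.cast hk.symm t) with hc
  have hc0 : c 0 = j := rfl
  have hclast : c ⟨k + 1, by omega⟩ = i := by
    have h1 : L.getLast (List.cons_ne_nil _ _) = L.get ⟨L.length - 1, by omega⟩ :=
      List.getLast_eq_getElem _
    have h2 : (⟨L.length - 1, by omega⟩ : Fin L.length)
        = Fin.cast hk.symm ⟨k + 1, by omega⟩ := by
      apply Fin.ext
      simp [hk]
    rw [h2] at h1
    exact h1.symm.trans hlast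
  have hcyc : IsCycle A c := by
    constructor
    · intro a b hab
      have hinj := List.nodup_iff_injective_get.mp hnd
      have h2 := hinj hab
      simpa [Fin.ext_iff] using h2
    · intro m
      by_cases hm : (m : ℕ) < k + 1
      · have hml : m ≠ Fin.last (k + 1) := by
          intro h'
          rw [h'] at hm
          simp at hm
        have hm1 : ((m + 1 : Fin (k + 2)) : ℕ) = (m : ℕ) + 1 := by
          rw [Fin.val_add_one, if_neg hml]
        have hch' : List.Chain' (Arc A) L := hch
        have key := List.isChain_iff_getElem.mp hch' (m : ℕ) (by omega)
        have e1 : Fin.cast hk.symm m = (⟨(m : ℕ), by omega⟩ : Fin L.length) := Fin.ext rfl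
        have e2 : Fin.cast hk.symm (m + 1) = (⟨(m : ℕ) + 1, by omega⟩ : Fin L.length) :=
          Fin.ext hm1
        show Arc A (L.get (Fin.cast hk.symm m)) (L.get (Fin.cast hk.symm (m + 1)))
        rw [e1, e2]
        exact key
      · have hm' : (m : ℕ) = k + 1 := by omega
        have h1 : m = ⟨k + 1, by omega⟩ := Fin.ext hm'
        have h2 : m + 1 = 0 := by
          rw [h1]
          apply Fin.ext
          simp [Fin.add_def]
        rw [h2, h1, hclast, hc0]
        exact h
  obtain ⟨⟨-, hrev⟩, -⟩ := hcb k c hcyc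
  have h0 := hrev 0
  simp only [neg_zero, zero_add] at h0
  have : c (-1) = i := by
    have e : (-1 : Fin (k + 2)) = ⟨k + 1, by omega⟩ := by
      apply Fin.ext
      rw [Fin.coe_neg_one]
    rw [e, hclast]
  rwa [hc0, this] at h0

open Finset in
/-- A connected graph on `Fin n` has at least `n - 1` edges. -/
lemma card_edges_of_connected {n : ℕ} (G : SimpleGraph (Fin n)) [DecidableRel G.Adj]
    (hG : G.Connected) (hn : 0 < n) : n - 1 ≤ #G.edgeFinset := by
  classical
  set v0 : Fin n := ⟨0, hn⟩ with hv0
  have key : ∀ v : Fin n, v ≠ v0 → ∃ w, G.Adj v w ∧ G.dist w v0 < G.dist v v0 := by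
    intro v hv
    obtain ⟨p, hp⟩ := hG.exists_walk_length_eq_dist v v0
    cases p with
    | nil => exact absurd rfl hv
    | cons hadj q =>
      refine ⟨_, hadj, lt_of_le_of_lt (SimpleGraph.dist_le q) ?_⟩
      rw [← hp]
      simp [SimpleGraph.Walk.length_cons]
  set f : Fin n → Sym2 (Fin n) :=
    fun v => if h : v ≠ v0 then s(v, (key v h).choose) else s(v0, v0) with hf
  have hmaps : ∀ v ∈ univ.erase v0, f v ∈ G.edgeFinset := by
    intro v hv
    have hvne : v ≠ v0 := (mem_erase.mp hv).1
    rw [hf]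
    simp only [dif_pos hvne]
    rw [SimpleGraph.mem_edgeFinset, SimpleGraph.mem_edgeSet]
    exact (key v hvne).choose_spec.1
  have hinj : Set.InjOn f (univ.erase v0) := by
    intro v hv v' hv' hff
    have hvne : v ≠ v0 := (mem_erase.mp hv).1
    have hvne' : v' ≠ v0 := (mem_erase.mp hv').1
    rw [hf] at hff
    simp only [dif_pos hvne, dif_pos hvne'] at hff
    rcases Sym2.eq_iff.mp hff with ⟨h1, -⟩ | ⟨h1, h2⟩
    · exact h1
    · exfalso
      have d1 := (key v hvne).choose_spec.2
      have d2 := (key v' hvne').choose_spec.2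
      have e1 : G.dist v v0 < G.dist v' v0 := by rw [h1]; exact d2
      have e2 : G.dist v' v0 < G.dist v v0 := by rw [← h2]; exact d1
      omega
  have := Finset.card_le_card_of_injOn f hmaps hinj
  rwa [Finset.card_erase_of_mem (mem_univ _), Finset.card_univ, Fintype.card_fin] at this

theorem stmt_4 {n : ℕ} (A : Fin n → Fin n → ℝ)
    (hsc : StronglyConnected A) (hcb : CycleBalanced A) :
    2 * (n - 1) ≤ {p : Fin n × Fin n | Arc A p.1 p.2}.ncard := by
  classical
  rcases Nat.eq_zero_or_pos n with rfl | hn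
  · simp
  set G : SimpleGraph (Fin n) :=
    { Adj := fun a b => Arc A a b
      symm := ⟨fun a b hab => arc_symm hsc hcb hab⟩
      loopless := ⟨fun a ha => ha.1 rfl⟩ } with hG
  have hGc : G.Connected := by
    rw [SimpleGraph.connected_iff]
    refine ⟨fun u v => ?_, ⟨⟨0, hn⟩⟩⟩
    induction hsc u v with
    | refl => exact SimpleGraph.Reachable.refl _
    | tail _ harc ih => exact ih.trans (SimpleGraph.Adj.reachable harc)
  have hcount : {p : Fin n × Fin n | Arc A p.1 p.2}.ncard
      = 2 * G.edgeFinset.card := by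
    rw [Set.ncard_eq_toFinset_card', Set.toFinset_setOf]
    rw [SimpleGraph.two_mul_card_edgeFinset]
  rw [hcount]
  have := card_edges_of_connected G hGc hn
  omega
end

section
/- Let G be a complete weighted digraph with n ≥ 3 vertices (a_{ij} > 0 for all i ≠ j). Then G is cycle-balanced if and only if every 3-cycle is balanced, i.e., for all distinct i, j, k: a_{ij} a_{jk} a_{ki} = a_{ik} a_{kj} a_{ji}. -/
/-- If all triangles are balanced, every cycle weight equals its reverse weight. -/
lemma stmt8_key {n k : ℕ} (A : Fin n → Fin n → ℝ) (hn : 3 ≤ n)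
    (hpos : ∀ i j : Fin n, i ≠ j → 0 < A i j)
    (h3 : ∀ i j k : Fin n, i ≠ j → j ≠ k → i ≠ k →
        A i j * A j k * A k i = A i k * A k j * A j i)
    (c : Fin (k+2) → Fin n) (hc : Function.Injective c) :
    (∏ m : Fin (k+2), A (c (m+1)) (c m)) = ∏ m : Fin (k+2), A (c m) (c (m+1)) := by
  have v0 : Fin n := ⟨0, by omega⟩
  set g : Fin n → ℝ := fun i => if i = v0 then 1 else A i v0 / A v0 i with hg
  have gpos : ∀ i, 0 < g i := by
    intro i
    by_cases h : i = v0 <;> simp [hg, h]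
    exact div_pos (hpos _ _ h) (hpos _ _ (Ne.symm h))
  have ratio : ∀ i j : Fin n, i ≠ j → A i j * g j = g i * A j i := by
    intro i j hij
    by_cases hjv : j = v0
    · by_cases hiv : i = v0
      · exact absurd (hiv.trans hjv.symm) hij
      · have h2 : A v0 i ≠ 0 := (hpos _ _ fun h => hiv h.symm).ne'
        simp only [hg, if_pos hjv, if_neg hiv]
        rw [hjv]
        field_simp
    · by_cases hiv : i = v0
      · have h1 : A v0 j ≠ 0 := (hpos _ _ fun h => hjv h.symm).ne'
        simp only [hg, if_pos hiv, if_neg hjv]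
        rw [hiv]
        field_simp
      · have h1 : A v0 j ≠ 0 := (hpos _ _ fun h => hjv h.symm).ne'
        have h2 : A v0 i ≠ 0 := (hpos _ _ fun h => hiv h.symm).ne'
        have key := h3 i j v0 hij hjv hiv
        simp only [hg, if_neg hjv, if_neg hiv]
        field_simp
        linear_combination key
  have hne : ∀ m : Fin (k+2), c (m+1) ≠ c m := by
    intro m h
    have h2 : m + 1 = m := hc h
    simp [add_eq_left] at h2
  have shift : (∏ m : Fin (k+2), g (c (m+1))) = ∏ m : Fin (k+2), g (c m) :=
    Fintype.prod_equiv (Equiv.addRight (1 : Fin (k+2))) _ _ (fun x => rfl)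
  have hgprod : (∏ m : Fin (k+2), g (c m)) ≠ 0 :=
    (Finset.prod_pos fun m _ => gpos (c m)).ne'
  apply mul_right_cancel₀ hgprod
  calc (∏ m : Fin (k+2), A (c (m+1)) (c m)) * ∏ m : Fin (k+2), g (c m)
      = ∏ m : Fin (k+2), (A (c (m+1)) (c m) * g (c m)) := Finset.prod_mul_distrib.symm
    _ = ∏ m : Fin (k+2), (g (c (m+1)) * A (c m) (c (m+1))) :=
        Finset.prod_congr rfl fun m _ => ratio _ _ (hne m)
    _ = (∏ m : Fin (k+2), g (c (m+1))) * ∏ m : Fin (k+2), A (c m) (c (m+1)) :=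
        Finset.prod_mul_distrib
    _ = (∏ m : Fin (k+2), A (c m) (c (m+1))) * ∏ m : Fin (k+2), g (c m) := by
        rw [shift]; ring

theorem stmt_8 {n : ℕ} (hn : 3 ≤ n) (A : Fin n → Fin n → ℝ)
    (hpos : ∀ i j, i ≠ j → 0 < A i j) (hdiag : ∀ i, A i i = 0) :
    CycleBalanced A ↔
      ∀ i j k : Fin n, i ≠ j → j ≠ k → i ≠ k →
        A i j * A j k * A k i = A i k * A k j * A j i := by
  constructor
  · -- forward: apply cycle balance to the 3-cycle ![i,j,k]
    intro hB i j k hij hjk hik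
    have hinj : Function.Injective (![i, j, k] : Fin 3 → Fin n) := by
      intro a b hab
      fin_cases a <;> fin_cases b <;> simp_all
    have hcyc : IsCycle A ![i, j, k] := by
      refine ⟨hinj, fun m => ⟨fun h => ?_, ?_⟩⟩
      · have : m = m + 1 := hinj h
        simp [add_eq_left, eq_comm] at this
      · apply hpos
        intro h
        have : m + 1 = m := hinj h
        simp [add_eq_left] at this
    have this : (∏ m : Fin 3, A (![i, j, k] (m + 1)) (![i, j, k] m))
        = ∏ m : Fin 3, A (![i, j, k] (-(m + 1))) (![i, j, k] (-m)) := (hB 1 ![i, j, k] hcyc).2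
    have e1 : (0:Fin 3) + 1 = 1 := by decide
    have e2 : (1:Fin 3) + 1 = 2 := by decide
    have e3 : (2:Fin 3) + 1 = 0 := by decide
    have e4 : -(0:Fin 3) = 0 := by decide
    have e5 : -(1:Fin 3) = 2 := by decide
    have e6 : -(2:Fin 3) = 1 := by decide
    have f0 : (![i, j, k] : Fin 3 → Fin n) 0 = i := rfl
    have f1 : (![i, j, k] : Fin 3 → Fin n) 1 = j := rfl
    have f2 : (![i, j, k] : Fin 3 → Fin n) 2 = k := rfl
    simp only [Fin.prod_univ_three, e1, e2, e3, e4, e5, e6,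
      f0, f1, f2] at this
    linear_combination -this
  · -- backward
    intro h3 k c hcyc
    obtain ⟨hinj, harc⟩ := hcyc
    have hrinj : Function.Injective (fun m => c (-m)) := by
      intro a b hab
      have := hinj hab
      exact neg_injective this
    have hrarc : ∀ m : Fin (k+2), Arc A (c (-m)) (c (-(m+1))) := by
      intro m
      have hne : (-m : Fin (k+2)) ≠ -(m+1) := by
        intro h
        have : (m : Fin (k+2)) = m + 1 := neg_injective h
        simp [add_eq_left, eq_comm] at this
      refine ⟨fun h => hne (hinj h), hpos _ _ fun h => hne (hinj h).symm⟩
    refine ⟨⟨hrinj, fun m => hrarc m⟩, ?_⟩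
    have key := stmt8_key A hn hpos h3 c hinj
    have rev : (∏ m : Fin (k+2), A (c (-(m+1))) (c (-m)))
        = ∏ m : Fin (k+2), A (c m) (c (m+1)) := by
      refine (Fintype.prod_equiv
        ((Equiv.addRight (1 : Fin (k+2))).trans (Equiv.neg _)) _ _ fun x => ?_).symm
      have h1 : -(-(x+1) + 1) = x := by abel
      have h2 : -(-(x+1)) = x + 1 := by abel
      simp only [Equiv.trans_apply, Equiv.coe_addRight, Equiv.neg_apply, h1, h2]
    simp only [cycWeight]
    rw [key, ← rev]
end

section
/- Let L be the n×n row Laplacian matrix of a weighted digraph with off-diagonal entries L_{ij} = −a_{ij} (i ≠ j) and diagonal entries L_{ii} = Σ_{k≠i} a_{ik}, where a_{ij} ≥ 0. Let α_i be the cofactor of the i-th diagonal element of L. Then the row vector (α_1, …, α_n) is a left eigenvector of L for the eigenvalue 0, and the column vector (1, …, 1)^T is a right eigenvector of L for the eigenvalue 0. -/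
theorem stmt_9 (n : ℕ) (a : Fin (n + 1) → Fin (n + 1) → ℝ)
    (ha : ∀ i j, i ≠ j → 0 ≤ a i j)
    (L : Matrix (Fin (n + 1)) (Fin (n + 1)) ℝ)
    (hLdiag : ∀ i, L i i = ∑ k ∈ Finset.univ.filter (· ≠ i), a i k)
    (hLoff : ∀ i j, i ≠ j → L i j = -a i j)
    (α : Fin (n + 1) → ℝ)
    (hα : ∀ i, α i = (L.submatrix i.succAbove i.succAbove).det) :
    Matrix.vecMul α L = 0 ∧ L.mulVec (fun _ => 1) = 0 := by
  classical
  -- all rows of L sum to zero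
  have hsum : ∀ i, ∑ j, L i j = 0 := by
    intro i
    rw [← Finset.sum_erase_add _ _ (Finset.mem_univ i), hLdiag i]
    have h1 : ∑ j ∈ Finset.univ.erase i, L i j
        = -∑ k ∈ Finset.univ.filter (· ≠ i), a i k := by
      rw [← Finset.sum_neg_distrib]
      apply Finset.sum_congr
      · ext x; simp [Finset.mem_erase, Finset.mem_filter, and_comm]
      · intro x hx
        exact hLoff i x (Ne.symm (Finset.mem_filter.mp hx).2)
    rw [h1]; ring
  -- any matrix with all rows summing to zero is singular
  have hones : (fun _ : Fin (n + 1) => (1 : ℝ)) ≠ 0 := by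
    intro h
    have := congrFun h 0
    simp at this
  have hdet0 : ∀ M : Matrix (Fin (n + 1)) (Fin (n + 1)) ℝ,
      (∀ i, ∑ j, M i j = 0) → M.det = 0 := by
    intro M hM
    rw [← Matrix.exists_mulVec_eq_zero_iff]
    refine ⟨fun _ => 1, hones, ?_⟩
    funext i
    simp [Matrix.mulVec, dotProduct, hM i]
  have hmul : L.mulVec (fun _ => 1) = 0 := by
    funext i
    simp [Matrix.mulVec, dotProduct, hsum i]
  have hdetL : L.det = 0 := hdet0 L hsum
  -- α i equals the (i,i) entry of the adjugate
  have hαadj : ∀ i, α i = L.adjugate i i := by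
    intro i
    rw [hα i, Matrix.adjugate_fin_succ_eq_det_submatrix]
    have : ((-1 : ℝ)) ^ ((i : ℕ) + (i : ℕ)) = 1 := Even.neg_one_pow ⟨i, rfl⟩
    rw [this, one_mul]
  -- cofactors along a row are constant
  have hconst : ∀ i j : Fin (n + 1), L.adjugate j i = α i := by
    intro i j
    rw [hαadj i, Matrix.adjugate_apply, Matrix.adjugate_apply]
    have key : (L.updateRow i (Pi.single j 1 - Pi.single i 1)).det = 0 := by
      apply hdet0
      intro k
      by_cases hk : k = i
      · subst hk
        simp [Matrix.updateRow_self, Pi.sub_apply, Finset.sum_sub_distrib,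
          Finset.sum_pi_single']
      · have h2 : ∑ l, L.updateRow i (Pi.single j 1 - Pi.single i 1) k l = ∑ l, L k l :=
          Finset.sum_congr rfl fun l _ => by rw [Matrix.updateRow_ne hk]
        rw [h2]; exact hsum k
    have hadd := Matrix.det_updateRow_add L i
      (Pi.single j (1 : ℝ) - Pi.single i 1) (Pi.single i 1)
    rw [sub_add_cancel, key, zero_add] at hadd
    exact hadd
  constructor
  · funext j
    have : Matrix.vecMul α L j = (L.adjugate * L) j j := by
      rw [Matrix.mul_apply]
      simp only [Matrix.vecMul, dotProduct]
      exact Finset.sum_congr rfl fun i _ => by rw [hconst i j]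
    rw [this, Matrix.adjugate_mul, hdetL]
    simp
  · exact hmul
end

section
/- Let L be an irreducible connection matrix with zero column sums and let θ be the positive right eigenvector of L for eigenvalue s(L) = 0 normalized so Σθ_i = 1. If r = δθ for some δ > 0, then the unique positive equilibrium of w_i' = μ Σ_j L_{ij} w_j + w_i(r_i − w_i) is w* = r, for every μ > 0. -/
/-- Irreducibility of a matrix (as a function). -/
def MatIrreducible {n : ℕ} (L : Fin n → Fin n → ℝ) : Prop :=
  ∀ E : Set (Fin n), E.Nonempty → Eᶜ.Nonempty → ∃ i ∈ E, ∃ j ∈ Eᶜ, L i j ≠ 0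

lemma aux_upper (n : ℕ) (μ : ℝ) (hμ : 0 < μ) (L : Fin n → Fin n → ℝ)
    (hoff : ∀ i j, i ≠ j → 0 ≤ L i j)
    (r : Fin n → ℝ) (hrpos : ∀ i, 0 < r i)
    (hLr : ∀ i, ∑ j, L i j * r j = 0)
    (w : Fin n → ℝ) (hwpos : ∀ i, 0 < w i)
    (heq : ∀ i, μ * ∑ j, L i j * w j + w i * (r i - w i) = 0) :
    ∀ i, w i ≤ r i := by
  intro i
  obtain ⟨i0, -, hmax⟩ := Finset.exists_max_image Finset.univ (fun k => w k / r k)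
    ⟨i, Finset.mem_univ i⟩
  set t := w i0 / r i0 with ht
  have hle : ∀ j, w j ≤ t * r j := by
    intro j
    have := hmax j (Finset.mem_univ j)
    exact (div_le_iff₀ (hrpos j)).mp this
  have hi0 : w i0 = t * r i0 := by
    rw [ht, div_mul_cancel₀ _ (hrpos i0).ne']
  have hS : ∑ j, L i0 j * w j ≤ 0 := by
    have h1 : ∑ j, L i0 j * w j ≤ ∑ j, L i0 j * (t * r j) := by
      apply Finset.sum_le_sum
      intro j _
      rcases eq_or_ne i0 j with h | h
      · rw [← h, hi0]
      · exact mul_le_mul_of_nonneg_left (hle j) (hoff i0 j h)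
    have h2 : ∑ j, L i0 j * (t * r j) = t * ∑ j, L i0 j * r j := by
      rw [Finset.mul_sum]; congr 1; funext j; ring
    rw [h2, hLr i0, mul_zero] at h1
    exact h1
  have h3 := heq i0
  have h4 : w i0 ≤ r i0 := by nlinarith [hwpos i0]
  have ht1 : t ≤ 1 := (div_le_one (hrpos i0)).mpr h4
  calc w i ≤ t * r i := hle i
    _ ≤ 1 * r i := mul_le_mul_of_nonneg_right ht1 (hrpos i).le
    _ = r i := one_mul _

lemma aux_lower (n : ℕ) (μ : ℝ) (hμ : 0 < μ) (L : Fin n → Fin n → ℝ)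
    (hoff : ∀ i j, i ≠ j → 0 ≤ L i j)
    (r : Fin n → ℝ) (hrpos : ∀ i, 0 < r i)
    (hLr : ∀ i, ∑ j, L i j * r j = 0)
    (w : Fin n → ℝ) (hwpos : ∀ i, 0 < w i)
    (heq : ∀ i, μ * ∑ j, L i j * w j + w i * (r i - w i) = 0) :
    ∀ i, r i ≤ w i := by
  intro i
  obtain ⟨i0, -, hmin⟩ := Finset.exists_min_image Finset.univ (fun k => w k / r k)
    ⟨i, Finset.mem_univ i⟩
  set t := w i0 / r i0 with ht
  have hle : ∀ j, t * r j ≤ w j := by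
    intro j
    have := hmin j (Finset.mem_univ j)
    exact (le_div_iff₀ (hrpos j)).mp this
  have hi0 : w i0 = t * r i0 := by
    rw [ht, div_mul_cancel₀ _ (hrpos i0).ne']
  have hS : 0 ≤ ∑ j, L i0 j * w j := by
    have h1 : ∑ j, L i0 j * (t * r j) ≤ ∑ j, L i0 j * w j := by
      apply Finset.sum_le_sum
      intro j _
      rcases eq_or_ne i0 j with h | h
      · rw [← h, hi0]
      · exact mul_le_mul_of_nonneg_left (hle j) (hoff i0 j h)
    have h2 : ∑ j, L i0 j * (t * r j) = t * ∑ j, L i0 j * r j := by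
      rw [Finset.mul_sum]; congr 1; funext j; ring
    rw [h2, hLr i0, mul_zero] at h1
    exact h1
  have h3 := heq i0
  have h4 : r i0 ≤ w i0 := by nlinarith [hwpos i0]
  have ht1 : 1 ≤ t := (one_le_div (hrpos i0)).mpr h4
  calc r i = 1 * r i := (one_mul _).symm
    _ ≤ t * r i := mul_le_mul_of_nonneg_right ht1 (hrpos i).le
    _ ≤ w i := hle i

theorem stmt_14 (n : ℕ) (μ δ : ℝ) (hμ : 0 < μ) (hδ : 0 < δ)
    (L : Fin n → Fin n → ℝ)
    (hoff : ∀ i j, i ≠ j → 0 ≤ L i j)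
    (hcol : ∀ j, ∑ i, L i j = 0)
    (hirr : MatIrreducible L)
    (θ : Fin n → ℝ) (hθpos : ∀ i, 0 < θ i)
    (hθeig : ∀ i, ∑ j, L i j * θ j = 0) (hθnorm : ∑ i, θ i = 1)
    (r : Fin n → ℝ) (hrθ : ∀ i, r i = δ * θ i) :
    -- `r` is a positive equilibrium, and it is the unique one
    (∀ i, 0 < r i) ∧
    (∀ i, μ * ∑ j, L i j * r j + r i * (r i - r i) = 0) ∧
    (∀ w : Fin n → ℝ, (∀ i, 0 < w i) →
      (∀ i, μ * ∑ j, L i j * w j + w i * (r i - w i) = 0) → w = r) := by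
  have hrpos : ∀ i, 0 < r i := fun i => by rw [hrθ]; exact mul_pos hδ (hθpos i)
  have hLr : ∀ i, ∑ j, L i j * r j = 0 := by
    intro i
    have : ∑ j, L i j * r j = δ * ∑ j, L i j * θ j := by
      rw [Finset.mul_sum]; apply Finset.sum_congr rfl; intro j _; rw [hrθ]; ring
    rw [this, hθeig, mul_zero]
  refine ⟨hrpos, fun i => by rw [hLr, sub_self, mul_zero, mul_zero, add_zero], ?_⟩
  intro w hwpos heq
  funext i
  exact le_antisymm (aux_upper n μ hμ L hoff r hrpos hLr w hwpos heq i)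
    (aux_lower n μ hμ L hoff r hrpos hLr w hwpos heq i)
end

section
/- Suppose bc = 1 and the two single-species equilibria satisfy w*(μ_u, p) = c · w*(μ_v, q) componentwise. Then for every ρ ∈ [0,1], the pair (ρ w*(μ_u, p), (1−ρ) w*(μ_u, p)/c) is an equilibrium of the two-species competition patch system u_i' = μ_u Σ_j L_{ij} u_j + u_i(p_i − u_i − c v_i), v_i' = μ_v Σ_j L_{ij} v_j + v_i(q_i − b u_i − v_i). -/
theorem stmt_16 (n : ℕ) (μu μv b c : ℝ) (hb : 0 < b) (hc : 0 < c)
    (hbc : b * c = 1)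
    (L : Fin n → Fin n → ℝ)
    (hoff : ∀ i j, i ≠ j → 0 ≤ L i j)
    (hcol : ∀ j, ∑ i, L i j = 0)
    (hirr : MatIrreducible L)
    (p q : Fin n → ℝ) (hp : ∀ i, 0 < p i) (hq : ∀ i, 0 < q i)
    (wu wv : Fin n → ℝ)
    (hwupos : ∀ i, 0 < wu i)
    (hwu : ∀ i, μu * ∑ j, L i j * wu j + wu i * (p i - wu i) = 0)
    (hwvpos : ∀ i, 0 < wv i)
    (hwv : ∀ i, μv * ∑ j, L i j * wv j + wv i * (q i - wv i) = 0)
    (hwuv : ∀ i, wu i = c * wv i) :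
    ∀ ρ ∈ Set.Icc (0 : ℝ) 1,
      (∀ i, μu * ∑ j, L i j * (ρ * wu j) +
        (ρ * wu i) * (p i - ρ * wu i - c * ((1 - ρ) * wu i / c)) = 0) ∧
      (∀ i, μv * ∑ j, L i j * ((1 - ρ) * wu j / c) +
        ((1 - ρ) * wu i / c) * (q i - b * (ρ * wu i) - (1 - ρ) * wu i / c) = 0) := by
  intro ρ _
  have hc' : c ≠ 0 := ne_of_gt hc
  constructor
  · intro i
    have h := hwu i
    have hsum : ∑ j, L i j * (ρ * wu j) = ρ * ∑ j, L i j * wu j := by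
      rw [Finset.mul_sum]; exact Finset.sum_congr rfl (fun j _ => by ring)
    rw [hsum]
    field_simp
    linear_combination ρ * h
  · intro i
    have h := hwv i
    have hsum : ∑ j, L i j * ((1 - ρ) * wu j / c) = (1 - ρ) * ∑ j, L i j * wv j := by
      rw [Finset.mul_sum]
      exact Finset.sum_congr rfl (fun j _ => by rw [hwuv j]; field_simp)
    rw [hsum]
    have hwi : wu i = c * wv i := hwuv i
    rw [hwi]
    have hcc : c * wv i / c = wv i := by field_simp
    have hb' : b * c = 1 := hbc
    rw [show (1 - ρ) * (c * wv i) / c = (1 - ρ) * wv i by field_simp]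
    linear_combination (1 - ρ) * h - ρ * (1 - ρ) * wv i * wv i * hbc
end
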